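/- If the groups G_α and G_β are isomorphic, then: (i) there exists Q ∈ GL_m(ℤ) such that Q⁻¹·(im α)·Q = im β, i.e. the images of α and β are conjugate subgroups of GL_m(ℤ); and (ii) there exists an automorphism φ of F_n such that φ(ker α) = ker β, i.e. the kernels of α and β are mapped to one another by an automorphism of F_n. -/

import Mathlib

open Matrix SemidirectProduct

/-- The free abelian group `ℤ^m`, written multiplicatively. -/
abbrev FA (m : ℕ) : Type := Multiplicative (Fin m → ℤ)

/-- The (right) action of `GL_m(ℤ)` on `ℤ^m` (row vectors), as a homomorphism into
`MulAut (ℤ^m)`: the automorphism attached to `M` sends `a` to `a · M⁻¹`, so that in the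
semidirect product below one gets the relation `u⁻¹ tᵃ u = t^(a·A_u)`. -/
def rowAction (m : ℕ) :
    Matrix.GeneralLinearGroup (Fin m) ℤ →* MulAut (FA m) where
  toFun M :=
  { toFun := fun a => Multiplicative.ofAdd
      (Matrix.vecMul (Multiplicative.toAdd a)
        ((↑(M⁻¹) : Matrix (Fin m) (Fin m) ℤ)))
    invFun := fun a => Multiplicative.ofAdd
      (Matrix.vecMul (Multiplicative.toAdd a) ((↑M : Matrix (Fin m) (Fin m) ℤ)))
    left_inv := by
      intro a
      simp [Matrix.vecMul_vecMul]
    right_inv := by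
      intro a
      simp [Matrix.vecMul_vecMul]
    map_mul' := by
      intro a b
      simp [Matrix.add_vecMul] }
  map_one' := by
    ext a
    simp
  map_mul' := by
    intro M N
    ext a
    simp [Matrix.vecMul_vecMul, _root_.mul_inv_rev]

/-- The free-abelian by free group `G_α = F_n ⋉_α ℤ^m` associated to
`α : F_n → GL_m(ℤ)`; it satisfies `u⁻¹ tᵃ u = t^(a·A_u)`. -/
abbrev Gsd {n m : ℕ} (α : FreeGroup (Fin n) →* Matrix.GeneralLinearGroup (Fin m) ℤ) :
    Type :=
  FA m ⋊[(rowAction m).comp α] FreeGroup (Fin n)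

/-- `tA α a` is the element `tᵃ` of the abelian part of `G_α`. -/
def tA {n m : ℕ} (α : FreeGroup (Fin n) →* Matrix.GeneralLinearGroup (Fin m) ℤ)
    (a : Fin m → ℤ) : Gsd α :=
  SemidirectProduct.inl (Multiplicative.ofAdd a)

/-- `fE α u` is the element `u` of the free part of `G_α`. -/
def fE {n m : ℕ} (α : FreeGroup (Fin n) →* Matrix.GeneralLinearGroup (Fin m) ℤ)
    (u : FreeGroup (Fin n)) : Gsd α :=
  SemidirectProduct.inr u

/-- The projection `τ : G_α → ℤ^m`, reading off the abelian part of the normal form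
`g = u · tᵃ` (i.e. `τ (fE α u * tA α a) = a`). -/
def tau {n m : ℕ} (α : FreeGroup (Fin n) →* Matrix.GeneralLinearGroup (Fin m) ℤ)
    (g : Gsd α) : Fin m → ℤ :=
  Matrix.vecMul (Multiplicative.toAdd (SemidirectProduct.left g))
    ((↑(α (SemidirectProduct.right g)) : Matrix (Fin m) (Fin m) ℤ))



section Aux
open Subgroup

lemma freeGroup_eq_one_of_isEmpty {S : Type*} [IsEmpty S] (y : FreeGroup S) : y = 1 :=
  FreeGroup.induction_on y rfl (fun x => isEmptyElim x) (fun x _ => isEmptyElim x)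
    (fun x y hx hy => by rw [hx, hy, one_mul])

lemma exists_forall_mem_zpowers_of_comm {G : Type*} [Group G] [IsFreeGroup G]
    (hc : ∀ x y : G, Commute x y) : ∃ g : G, ∀ x : G, x ∈ Subgroup.zpowers g := by
  have hsub : ∀ a b : IsFreeGroup.Generators G, a = b := by
    intro a b; by_contra hab
    haveI := Classical.decEq (IsFreeGroup.Generators G)
    have hC := (hc (IsFreeGroup.of a) (IsFreeGroup.of b)).map
      (IsFreeGroup.lift (fun x => if x = a then Equiv.swap (0 : Fin 3) 1
        else if x = b then Equiv.swap (1 : Fin 3) 2 else 1))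
    rw [IsFreeGroup.lift_of, IsFreeGroup.lift_of, if_pos rfl, if_neg (Ne.symm hab),
      if_pos rfl] at hC
    exact absurd hC.eq (by decide)
  rcases isEmpty_or_nonempty (IsFreeGroup.Generators G) with hE | hne
  · refine ⟨1, fun x => ?_⟩
    have hx : (IsFreeGroup.mulEquiv G).symm x = 1 := freeGroup_eq_one_of_isEmpty _
    have : x = 1 := by
      have := congrArg (IsFreeGroup.mulEquiv G) hx
      simpa using this
    simp [this]
  · obtain ⟨a⟩ := hne
    refine ⟨IsFreeGroup.of a, fun x => ?_⟩
    have h1 : ∀ y : FreeGroup (IsFreeGroup.Generators G),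
        y ∈ Subgroup.zpowers (FreeGroup.of a) := by
      have htop : (⊤ : Subgroup (FreeGroup (IsFreeGroup.Generators G)))
          ≤ Subgroup.zpowers (FreeGroup.of a) := by
        rw [← FreeGroup.closure_range_of (IsFreeGroup.Generators G)]
        refine (Subgroup.closure_le _).mpr ?_
        rintro _ ⟨b, rfl⟩
        rw [hsub b a]
        exact Subgroup.mem_zpowers _
      exact fun y => htop (Subgroup.mem_top y)
    obtain ⟨k, hk⟩ := Subgroup.mem_zpowers_iff.1 (h1 ((IsFreeGroup.mulEquiv G).symm x))
    refine Subgroup.mem_zpowers_iff.2 ⟨k, ?_⟩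
    have := congrArg (IsFreeGroup.mulEquiv G) hk
    rw [map_zpow] at this
    simpa [IsFreeGroup.of] using this

lemma freeGroup_not_isOfFinOrder {X : Type*} {w : FreeGroup X} (hw : w ≠ 1) :
    ¬ IsOfFinOrder w := by
  intro hfin
  set H := Subgroup.zpowers w with hH
  have hWmem : w ∈ H := Subgroup.mem_zpowers w
  have hWne : (⟨w, hWmem⟩ : H) ≠ 1 := by
    intro hcon
    exact hw (congrArg Subtype.val hcon)
  have hHfin : Finite H := hfin.finite_zpowers.to_subtype
  rcases isEmpty_or_nonempty (IsFreeGroup.Generators H) with hE | hne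
  · exact hWne (by
      have hx : (IsFreeGroup.mulEquiv H).symm (⟨w, hWmem⟩ : H) = 1 :=
        freeGroup_eq_one_of_isEmpty _
      have := congrArg (IsFreeGroup.mulEquiv H) hx
      simpa using this)
  · obtain ⟨a⟩ := hne
    have hsurj : Function.Surjective
        (IsFreeGroup.lift (fun _ : IsFreeGroup.Generators H => Multiplicative.ofAdd (1 : ℤ))
          : H →* Multiplicative ℤ) := by
      intro z
      refine ⟨(IsFreeGroup.of a) ^ z.toAdd, ?_⟩
      rw [map_zpow, IsFreeGroup.lift_of]
      apply Multiplicative.toAdd.injective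
      simp
    have : Infinite (Multiplicative ℤ) := Int.infinite
    exact absurd (Infinite.of_surjective _ hsurj) (by
      rw [not_infinite_iff_finite]; exact hHfin)

lemma abelian_subgroup_cyclic {X : Type*} (H : Subgroup (FreeGroup X))
    (hcomm : ∀ x y : H, Commute x y) : ∃ w : FreeGroup X, H = Subgroup.zpowers w := by
  obtain ⟨g, hg⟩ := exists_forall_mem_zpowers_of_comm hcomm
  refine ⟨(g : FreeGroup X), le_antisymm ?_ (Subgroup.zpowers_le.mpr g.2)⟩
  intro x hx
  obtain ⟨k, hk⟩ := Subgroup.mem_zpowers_iff.1 (hg ⟨x, hx⟩)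
  refine Subgroup.mem_zpowers_iff.2 ⟨k, ?_⟩
  have := congrArg Subtype.val hk
  simpa using this


lemma commute_of_mem_closure {G : Type*} [Group G] {s : Set G}
    (hs : ∀ a ∈ s, ∀ b ∈ s, Commute a b) {x y : G}
    (hx : x ∈ Subgroup.closure s) (hy : y ∈ Subgroup.closure s) : Commute x y :=
  Subgroup.closure_induction₂ (p := fun a b _ _ => Commute a b)
    (fun a b ha hb => hs a ha b hb)
    (fun x _ => Commute.one_left x) (fun x _ => Commute.one_right x)
    (fun _ _ _ _ _ _ h1 h2 => h1.mul_left h2) (fun _ _ _ _ _ _ h1 h2 => h1.mul_right h2)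
    (fun _ _ _ _ h => h.inv_left) (fun _ _ _ _ h => h.inv_right) hx hy

lemma exists_common_zpow {X : Type*} {x y : FreeGroup X} (h : Commute x y) :
    ∃ (c : FreeGroup X) (p q : ℤ), x = c ^ p ∧ y = c ^ q := by
  set K := Subgroup.closure ({x, y} : Set (FreeGroup X)) with hK
  have hx : x ∈ K := Subgroup.subset_closure (by simp)
  have hy : y ∈ K := Subgroup.subset_closure (by simp)
  have hset : ∀ a ∈ ({x, y} : Set (FreeGroup X)), ∀ b ∈ ({x, y} : Set (FreeGroup X)),
      Commute a b := by
    rintro a ha b hb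
    rcases ha with rfl | ha <;> rcases hb with rfl | hb
    · exact Commute.refl _
    · rw [Set.mem_singleton_iff] at hb; subst hb; exact h
    · rw [Set.mem_singleton_iff] at ha; subst ha; exact h.symm
    · rw [Set.mem_singleton_iff] at ha hb; subst ha; subst hb; exact Commute.refl _
  have hcomm : ∀ a b : K, Commute a b := by
    rintro ⟨a, ha⟩ ⟨b, hb⟩
    exact Subtype.ext (commute_of_mem_closure hset ha hb)
  obtain ⟨c, hc⟩ := abelian_subgroup_cyclic K hcomm
  obtain ⟨p, hp⟩ := Subgroup.mem_zpowers_iff.1 (hc ▸ hx)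
  obtain ⟨q, hq⟩ := Subgroup.mem_zpowers_iff.1 (hc ▸ hy)
  exact ⟨c, p, q, hp.symm, hq.symm⟩

lemma exists_noncomm_conj {n : ℕ} (hn : 2 ≤ n) {u : FreeGroup (Fin n)} (hu : u ≠ 1) :
    ∃ v w : FreeGroup (Fin n), ¬ Commute (v * u * v⁻¹) (w * u * w⁻¹) := by
  by_contra hcon
  push_neg at hcon
  classical
  -- exponent sums
  set es : Fin n → FreeGroup (Fin n) → ℤ := fun i g =>
    Multiplicative.toAdd
      (FreeGroup.lift (fun x => Multiplicative.ofAdd (if x = i then (1 : ℤ) else 0)) g)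
    with hes
  have es_zpow : ∀ (i : Fin n) (g : FreeGroup (Fin n)) (k : ℤ), es i (g ^ k) = k * es i g := by
    intro i g k
    simp [hes, map_zpow, toAdd_zpow, smul_eq_mul]
  have es_sq : ∀ (i : Fin n) (g : FreeGroup (Fin n)), es i (g ^ (2 : ℕ)) = 2 * es i g := by
    intro i g
    simp [hes, map_pow, toAdd_pow, smul_eq_mul]
  have es_of : ∀ i j : Fin n, es i (FreeGroup.of j) = if j = i then 1 else 0 := by
    intro i j
    simp [hes, FreeGroup.lift_apply_of]
  -- the normal closure of u is abelian
  have hconj : ∀ x ∈ Group.conjugatesOfSet ({u} : Set (FreeGroup (Fin n))),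
      ∀ y ∈ Group.conjugatesOfSet ({u} : Set (FreeGroup (Fin n))), Commute x y := by
    intro x hx y hy
    rw [Group.mem_conjugatesOfSet_iff] at hx hy
    obtain ⟨a, ha, hax⟩ := hx
    obtain ⟨b, hb, hby⟩ := hy
    rw [Set.mem_singleton_iff] at ha hb; subst ha; subst hb
    obtain ⟨c, hc⟩ := isConj_iff.1 hax
    obtain ⟨d, hd⟩ := isConj_iff.1 hby
    rw [← hc, ← hd]
    exact hcon c d
  set H := Subgroup.normalClosure ({u} : Set (FreeGroup (Fin n))) with hHdef
  have hab : ∀ x y : H, Commute x y := by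
    rintro ⟨x, hx⟩ ⟨y, hy⟩
    exact Subtype.ext (commute_of_mem_closure hconj hx hy)
  obtain ⟨w, hw⟩ := abelian_subgroup_cyclic H hab
  have humem : u ∈ H := Subgroup.subset_normalClosure (Set.mem_singleton u)
  have hwne : w ≠ 1 := by
    rintro rfl
    rw [hw] at humem
    obtain ⟨k, hk⟩ := Subgroup.mem_zpowers_iff.1 humem
    exact hu (by rw [← hk, _root_.one_zpow])
  have hinj : Function.Injective (fun k : ℤ => w ^ k) :=
    injective_zpow_iff_not_isOfFinOrder.2 (freeGroup_not_isOfFinOrder hwne)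
  have hnormal : H.Normal := Subgroup.normalClosure_normal
  have hwmem : w ∈ H := hw ▸ Subgroup.mem_zpowers w
  -- every square commutes with w
  have key : ∀ g : FreeGroup (Fin n), Commute w (g ^ (2 : ℕ)) := by
    intro g
    obtain ⟨k, hk⟩ := Subgroup.mem_zpowers_iff.1 (hw ▸ hnormal.conj_mem w hwmem g)
    obtain ⟨l, hl⟩ := Subgroup.mem_zpowers_iff.1 (hw ▸ hnormal.conj_mem w hwmem g⁻¹)
    rw [inv_inv] at hl
    have h1 : (g⁻¹ * w * g) ^ k = w := by
      calc (g⁻¹ * w * g) ^ k = g⁻¹ * w ^ k * g := by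
            rw [show g⁻¹ * w * g = g⁻¹ * w * g⁻¹⁻¹ by rw [inv_inv], conj_zpow, inv_inv]
        _ = g⁻¹ * (g * w * g⁻¹) * g := by rw [hk]
        _ = w := by group
    have hlk : l * k = 1 := hinj (show w ^ (l * k) = w ^ (1 : ℤ) by
      rw [_root_.zpow_mul, hl, h1, zpow_one])
    have hk1 : k = 1 ∨ k = -1 :=
      Int.isUnit_iff.1 (IsUnit.of_mul_eq_one l (by rw [mul_comm] at hlk; exact hlk))
    rcases hk1 with rfl | rfl
    · rw [zpow_one] at hk
      have hgw : Commute g w := by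
        have : g * w = w * g := by
          conv_lhs => rw [show g * w = (g * w * g⁻¹) * g by group, ← hk]
        exact this
      exact (hgw.pow_left 2).symm
    · have h2 : g * w * g⁻¹ = w⁻¹ := by rw [← hk]; simp
      have h3 : g ^ (2 : ℕ) * w * (g ^ (2 : ℕ))⁻¹ = w := by
        calc g ^ (2:ℕ) * w * (g ^ (2:ℕ))⁻¹ = g * (g * w * g⁻¹) * g⁻¹ := by
              rw [pow_two, _root_.mul_inv_rev]; simp [mul_assoc]
          _ = g * w⁻¹ * g⁻¹ := by rw [h2]
          _ = (g * w * g⁻¹)⁻¹ := by group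
          _ = w := by rw [h2, inv_inv]
      have : g ^ (2:ℕ) * w = w * g ^ (2:ℕ) := mul_inv_eq_iff_eq_mul.mp h3
      exact (Commute.symm this)
  -- endgame with exponent sums
  have pairfact : ∀ i j : Fin n, i ≠ j →
      es i w = 0 ∧ ∃ (d : FreeGroup (Fin n)) (p : ℤ), w = d ^ p ∧ es j d ≠ 0 := by
    intro i j hij
    obtain ⟨c, p, q, hwc, hsc⟩ := exists_common_zpow (key (FreeGroup.of j))
    have h2 : (2 : ℤ) = q * es j c := by
      have := congrArg (es j) hsc
      rw [es_sq, es_of, if_pos rfl, es_zpow] at this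
      simpa using this
    have h0 : 0 = q * es i c := by
      have := congrArg (es i) hsc
      rw [es_sq, es_of, if_neg (fun hji => hij hji.symm), es_zpow] at this
      simpa using this
    have hq : q ≠ 0 := by
      intro hq0; rw [hq0, zero_mul] at h2; exact two_ne_zero h2
    have hic : es i c = 0 := by
      rcases mul_eq_zero.1 h0.symm with h | h
      · exact absurd h hq
      · exact h
    constructor
    · rw [hwc, es_zpow, hic, mul_zero]
    · refine ⟨c, p, hwc, ?_⟩
      intro hjc
      rw [hjc, mul_zero] at h2
      exact two_ne_zero h2
  have hlt0 : (0 : ℕ) < n := by omega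
  have hlt1 : (1 : ℕ) < n := by omega
  have h01 : (⟨0, hlt0⟩ : Fin n) ≠ ⟨1, hlt1⟩ := by
    intro hcon01
    have := congrArg Fin.val hcon01
    simp at this
  obtain ⟨hes1, -⟩ := pairfact ⟨1, hlt1⟩ ⟨0, hlt0⟩ h01.symm
  obtain ⟨-, d, p, hwd, hd1⟩ := pairfact ⟨0, hlt0⟩ ⟨1, hlt1⟩ h01
  have : p * es ⟨1, hlt1⟩ d = 0 := by
    rw [← es_zpow, ← hwd]
    exact hes1
  rcases mul_eq_zero.1 this with hp | hd
  · exact hwne (by rw [hwd, hp, zpow_zero])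
  · exact hd1 hd

end Aux

section SDP

variable {n m : ℕ}

/-- If the `F_n`-component of `x` is trivial, `x` lies in the abelian part. -/
lemma eq_inl_left {α : FreeGroup (Fin n) →* Matrix.GeneralLinearGroup (Fin m) ℤ}
    (x : Gsd α) (hx : rightHom x = 1) : inl x.left = x := by
  have h := inl_left_mul_inr_right x
  rw [show x.right = rightHom x from rfl, hx] at h
  simpa using h

/-- Membership in the abelian part is characterized by commuting conjugates. -/
lemma rightHom_eq_one_iff (hn : 2 ≤ n)
    (α : FreeGroup (Fin n) →* Matrix.GeneralLinearGroup (Fin m) ℤ) (g : Gsd α) :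
    rightHom g = 1 ↔ ∀ v w : Gsd α, Commute (v * g * v⁻¹) (w * g * w⁻¹) := by
  constructor
  · intro hg v w
    have h1 : ∀ x : Gsd α, rightHom (x * g * x⁻¹) = 1 := by
      intro x
      rw [_root_.map_mul, _root_.map_mul, _root_.map_inv, hg, mul_one, mul_inv_cancel]
    have h2 : ∀ x y : Gsd α, rightHom x = 1 → rightHom y = 1 → Commute x y := by
      intro x y hx hy
      rw [← eq_inl_left x hx, ← eq_inl_left y hy]
      show _ = _
      rw [← _root_.map_mul, ← _root_.map_mul, mul_comm]
    exact h2 _ _ (h1 v) (h1 w)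
  · intro hcomm
    by_contra hne
    obtain ⟨v, w, hvw⟩ := exists_noncomm_conj hn hne
    have hc := (hcomm (inr v) (inr w)).map (rightHom : Gsd α →* FreeGroup (Fin n))
    rw [_root_.map_mul, _root_.map_mul, _root_.map_inv, _root_.map_mul, _root_.map_mul,
      _root_.map_inv, rightHom_inr, rightHom_inr] at hc
    exact hvw hc

/-- An isomorphism of the semidirect products preserves the abelian part. -/
lemma transfer (hn : 2 ≤ n)
    {α β : FreeGroup (Fin n) →* Matrix.GeneralLinearGroup (Fin m) ℤ}
    (e : Gsd α ≃* Gsd β) (g : Gsd α) (hg : rightHom g = 1) :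
    rightHom (e g) = 1 := by
  rw [rightHom_eq_one_iff hn β]
  intro v w
  have h1 : ∀ x : Gsd β, x * e g * x⁻¹ = e (e.symm x * g * (e.symm x)⁻¹) := by
    intro x
    rw [_root_.map_mul, _root_.map_mul, _root_.map_inv, e.apply_symm_apply]
  rw [h1 v, h1 w]
  exact (((rightHom_eq_one_iff hn α g).1 hg) _ _).map e

lemma row_ext {M N : Matrix (Fin m) (Fin m) ℤ}
    (h : ∀ a : Fin m → ℤ, Matrix.vecMul a M = Matrix.vecMul a N) : M = N := by
  ext i j
  have := congrFun (h (Pi.single i 1)) j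
  rwa [Matrix.single_one_vecMul, Matrix.single_one_vecMul] at this

lemma additive_eq_vecMul (f : (Fin m → ℤ) → (Fin m → ℤ))
    (hf : ∀ a b, f (a + b) = f a + f b) (a : Fin m → ℤ) :
    f a = Matrix.vecMul a (Matrix.of fun i j => f (Pi.single i 1) j) := by
  set F : (Fin m → ℤ) →+ (Fin m → ℤ) := AddMonoidHom.mk' f hf with hF
  have h1 : a = ∑ i, (a i) • Pi.single i (1 : ℤ) := by
    funext r
    simp [Finset.sum_apply, Pi.single_apply, smul_eq_mul]
  have h2 : f a = ∑ i, (a i) • f (Pi.single i 1) := by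
    conv_lhs => rw [show f = ⇑F from rfl, h1]
    rw [map_sum]
    congr 1
    funext i
    rw [map_zsmul]
    rfl
  funext j
  rw [h2]
  simp [Matrix.vecMul, dotProduct, Finset.sum_apply, smul_eq_mul]

/-- conjugation relation in the semidirect product -/
lemma conj_inl_gsd {α : FreeGroup (Fin n) →* Matrix.GeneralLinearGroup (Fin m) ℤ}
    (u : FreeGroup (Fin n)) (a : Fin m → ℤ) :
    (inr u : Gsd α)⁻¹ * inl (Multiplicative.ofAdd a) * inr u
      = inl (Multiplicative.ofAdd
          (Matrix.vecMul a ((↑(α u) : Matrix (Fin m) (Fin m) ℤ)))) := by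
  have h := inl_aut_inv (φ := (rowAction m).comp α) (g := u) (n := Multiplicative.ofAdd a)
  rw [← _root_.map_inv, ← h]
  rfl

end SDP

/-- If `G_α ≅ G_β` then the images of `α` and `β` are conjugate in `GL_m(ℤ)` and their
kernels are related by an automorphism of `F_n`. -/
theorem iso_necessary {n m : ℕ} (hn : 2 ≤ n) (hm : 1 ≤ m)
    (α β : FreeGroup (Fin n) →* Matrix.GeneralLinearGroup (Fin m) ℤ)
    (h : Nonempty (Gsd α ≃* Gsd β)) :
    (∃ Q : Matrix.GeneralLinearGroup (Fin m) ℤ,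
        ∀ M : Matrix.GeneralLinearGroup (Fin m) ℤ,
          M ∈ α.range ↔ Q⁻¹ * M * Q ∈ β.range) ∧
    (∃ φ : FreeGroup (Fin n) ≃* FreeGroup (Fin n),
        Subgroup.map φ.toMonoidHom α.ker = β.ker) := by
  obtain ⟨e⟩ := h
  -- the induced map on the abelian parts
  set Tf : (Fin m → ℤ) → (Fin m → ℤ) :=
    fun a => Multiplicative.toAdd ((e (inl (Multiplicative.ofAdd a))).left) with hTfdef
  set Tg : (Fin m → ℤ) → (Fin m → ℤ) :=
    fun a => Multiplicative.toAdd ((e.symm (inl (Multiplicative.ofAdd a))).left) with hTgdef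
  have hTfl : ∀ a, e (inl (Multiplicative.ofAdd a)) = inl (Multiplicative.ofAdd (Tf a)) := by
    intro a
    have := eq_inl_left (e (inl (Multiplicative.ofAdd a)))
      (transfer hn e _ (rightHom_inl _))
    simpa [hTfdef] using this.symm
  have hTgl : ∀ a, e.symm (inl (Multiplicative.ofAdd a)) = inl (Multiplicative.ofAdd (Tg a)) := by
    intro a
    have := eq_inl_left (e.symm (inl (Multiplicative.ofAdd a)))
      (transfer hn e.symm _ (rightHom_inl _))
    simpa [hTgdef] using this.symm
  have hTfadd : ∀ a b, Tf (a + b) = Tf a + Tf b := by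
    intro a b
    have h1 : e (inl (Multiplicative.ofAdd (a + b)))
        = inl (Multiplicative.ofAdd (Tf a + Tf b)) := by
      rw [ofAdd_add, _root_.map_mul, _root_.map_mul, hTfl, hTfl, ← _root_.map_mul, ← ofAdd_add]
    have h2 := hTfl (a + b)
    rw [h1] at h2
    exact (Multiplicative.ofAdd.injective (inl_injective h2)).symm
  have hTgadd : ∀ a b, Tg (a + b) = Tg a + Tg b := by
    intro a b
    have h1 : e.symm (inl (Multiplicative.ofAdd (a + b)))
        = inl (Multiplicative.ofAdd (Tg a + Tg b)) := by
      rw [ofAdd_add, _root_.map_mul, _root_.map_mul, hTgl, hTgl, ← _root_.map_mul, ← ofAdd_add]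
    have h2 := hTgl (a + b)
    rw [h1] at h2
    exact (Multiplicative.ofAdd.injective (inl_injective h2)).symm
  have hTgTf : ∀ a, Tg (Tf a) = a := by
    intro a
    have h2 := hTgl (Tf a)
    rw [← hTfl, e.symm_apply_apply] at h2
    exact (Multiplicative.ofAdd.injective (inl_injective h2)).symm
  have hTfTg : ∀ a, Tf (Tg a) = a := by
    intro a
    have h2 := hTfl (Tg a)
    rw [← hTgl, e.apply_symm_apply] at h2
    exact (Multiplicative.ofAdd.injective (inl_injective h2)).symm
  -- matrices
  set QM : Matrix (Fin m) (Fin m) ℤ := Matrix.of fun i j => Tf (Pi.single i 1) j with hQM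
  set QM' : Matrix (Fin m) (Fin m) ℤ := Matrix.of fun i j => Tg (Pi.single i 1) j with hQM'
  have hQf : ∀ a, Tf a = Matrix.vecMul a QM := fun a => additive_eq_vecMul Tf hTfadd a
  have hQg : ∀ a, Tg a = Matrix.vecMul a QM' := fun a => additive_eq_vecMul Tg hTgadd a
  have hQQ' : QM * QM' = 1 := by
    apply row_ext
    intro a
    rw [Matrix.vecMul_one, ← Matrix.vecMul_vecMul, ← hQf, ← hQg, hTgTf]
  have hQ'Q : QM' * QM = 1 := by
    apply row_ext
    intro a
    rw [Matrix.vecMul_one, ← Matrix.vecMul_vecMul, ← hQg, ← hQf, hTfTg]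
  set Q : Matrix.GeneralLinearGroup (Fin m) ℤ := ⟨QM, QM', hQQ', hQ'Q⟩ with hQ
  -- the induced automorphism of the free group
  set φf : FreeGroup (Fin n) → FreeGroup (Fin n) := fun u => rightHom (e (inr u)) with hφf
  set φg : FreeGroup (Fin n) → FreeGroup (Fin n) := fun u => rightHom (e.symm (inr u)) with hφg
  have hdecomp : ∀ x : Gsd β, inr (rightHom x : FreeGroup (Fin n)) = (inl x.left)⁻¹ * x := by
    intro x
    rw [eq_inv_mul_iff_mul_eq]
    exact inl_left_mul_inr_right x
  have hdecompa : ∀ x : Gsd α, inr (rightHom x : FreeGroup (Fin n)) = (inl x.left)⁻¹ * x := by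
    intro x
    rw [eq_inv_mul_iff_mul_eq]
    exact inl_left_mul_inr_right x
  have hleftinv : ∀ u, φg (φf u) = u := by
    intro u
    show rightHom (e.symm (inr (rightHom (e (inr u))))) = u
    rw [hdecomp (e (inr u)), _root_.map_mul, _root_.map_inv, e.symm_apply_apply,
      _root_.map_mul, _root_.map_inv, rightHom_inr,
      transfer hn e.symm _ (rightHom_inl _), inv_one, one_mul]
  have hrightinv : ∀ u, φf (φg u) = u := by
    intro u
    show rightHom (e (inr (rightHom (e.symm (inr u))))) = u
    rw [hdecompa (e.symm (inr u)), _root_.map_mul, _root_.map_inv, e.apply_symm_apply,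
      _root_.map_mul, _root_.map_inv, rightHom_inr,
      transfer hn e _ (rightHom_inl _), inv_one, one_mul]
  set φ : FreeGroup (Fin n) ≃* FreeGroup (Fin n) :=
    { toFun := φf
      invFun := φg
      left_inv := hleftinv
      right_inv := hrightinv
      map_mul' := by
        intro u v
        simp only [hφf, _root_.map_mul] } with hφ
  -- the intertwining relation
  have hrel : ∀ (u : FreeGroup (Fin n)) (a : Fin m → ℤ),
      Tf (Matrix.vecMul a ((↑(α u) : Matrix (Fin m) (Fin m) ℤ)))
        = Matrix.vecMul (Tf a) ((↑(β (φf u)) : Matrix (Fin m) (Fin m) ℤ)) := by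
    intro u a
    have h1 := congrArg e (conj_inl_gsd (α := α) u a)
    rw [_root_.map_mul, _root_.map_mul, _root_.map_inv, hTfl, hTfl] at h1
    have hxd : e (inr u) = inl (e (inr u)).left * inr (φf u) := by
      conv_lhs => rw [← inl_left_mul_inr_right (e (inr u))]
      rfl
    rw [hxd] at h1
    have hcommGsd : (inl (e (inr u)).left : Gsd β)⁻¹ * inl (Multiplicative.ofAdd (Tf a))
        * inl (e (inr u)).left = inl (Multiplicative.ofAdd (Tf a)) := by
      rw [← _root_.map_inv, ← _root_.map_mul, ← _root_.map_mul]
      congr 1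
      rw [mul_comm, ← mul_assoc, mul_inv_cancel, one_mul]
    have hstep : (inl (e (inr u)).left * inr (φf u) : Gsd β)⁻¹
          * inl (Multiplicative.ofAdd (Tf a)) * (inl (e (inr u)).left * inr (φf u))
        = (inr (φf u))⁻¹ * ((inl (e (inr u)).left)⁻¹ * inl (Multiplicative.ofAdd (Tf a))
          * inl (e (inr u)).left) * inr (φf u) := by
      group
    rw [hstep, hcommGsd, conj_inl_gsd (α := β) (φf u) (Tf a)] at h1
    exact (Multiplicative.ofAdd.injective (inl_injective h1)).symm
  have hmat : ∀ u : FreeGroup (Fin n),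
      (↑(α u) : Matrix (Fin m) (Fin m) ℤ) * QM
        = QM * (↑(β (φf u)) : Matrix (Fin m) (Fin m) ℤ) := by
    intro u
    apply row_ext
    intro a
    rw [← Matrix.vecMul_vecMul, ← Matrix.vecMul_vecMul, ← hQf, ← hQf]
    exact hrel u a
  have hGL : ∀ u : FreeGroup (Fin n), α u * Q = Q * β (φf u) := by
    intro u
    ext1
    rw [Units.val_mul, Units.val_mul]
    exact hmat u
  have hker : ∀ u, α u = 1 ↔ β (φf u) = 1 := by
    intro u
    have h := hGL u
    constructor
    · intro h1
      rw [h1, one_mul] at h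
      exact left_eq_mul.mp h
    · intro h1
      rw [h1, mul_one] at h
      exact mul_eq_right.mp h
  constructor
  · refine ⟨Q, fun M => ?_⟩
    constructor
    · rintro ⟨u, rfl⟩
      refine ⟨φf u, ?_⟩
      have h3 : Q⁻¹ * α u * Q = β (φf u) := by
        rw [mul_assoc, hGL u, ← mul_assoc, inv_mul_cancel, one_mul]
      exact h3.symm
    · rintro ⟨v, hv⟩
      refine ⟨φg v, ?_⟩
      have h2 := hGL (φg v)
      rw [hrightinv v] at h2
      have h3 : α (φg v) = Q * β v * Q⁻¹ := by
        rw [← h2]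
        group
      rw [h3, hv]
      group
  · refine ⟨φ, ?_⟩
    ext x
    simp only [Subgroup.mem_map, MonoidHom.mem_ker]
    constructor
    · rintro ⟨u, hu, rfl⟩
      exact (hker u).1 hu
    · intro hx
      refine ⟨φg x, ?_, hrightinv x⟩
      have h2 := (hker (φg x)).2
      rw [hrightinv x] at h2
      exact h2 hx
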